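/- Let C(p,q) := (Γ(1+1/q)/Γ(1+1/q−p/q)) · q^{p/q} for 0 < p < q. Then for every fixed p > 0, lim_{q → p+} C(p,q) = 1 and lim_{q → ∞} C(p,q) = 1. -/

import Mathlib

open Real Filter

/-- The constant in the Hölder-type inequality. -/
noncomputable def holderConst (p q : ℝ) : ℝ :=
  (Real.Gamma (1 + 1 / q) / Real.Gamma (1 + 1 / q - p / q)) * q ^ (p / q)

lemma contGamma {s : ℝ} (hs : 0 < s) : ContinuousAt Real.Gamma s :=
  (Real.differentiableAt_Gamma (fun m => by nlinarith [Nat.cast_nonneg (α := ℝ) m])).continuousAt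

/-- `C(p,q) → 1` both as `q → p+` and as `q → ∞`. -/
theorem holderConst_limits (p : ℝ) (hp : 0 < p) :
    Tendsto (fun q => holderConst p q) (nhdsWithin p (Set.Ioi p)) (nhds 1) ∧
      Tendsto (fun q => holderConst p q) atTop (nhds 1) := by
  have hp0 : p ≠ 0 := hp.ne'
  have hΓp : Real.Gamma (1 / p) ≠ 0 := (Real.Gamma_pos_of_pos (by positivity)).ne'
  constructor
  · -- continuity at p
    have h1 : ContinuousAt (fun q : ℝ => 1 + 1 / q) p :=
      continuousAt_const.add (continuousAt_const.div continuousAt_id hp0)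
    have h2 : ContinuousAt (fun q : ℝ => 1 + 1 / q - p / q) p :=
      h1.sub (continuousAt_const.div continuousAt_id hp0)
    have hA : ContinuousAt (fun q : ℝ => Real.Gamma (1 + 1 / q)) p :=
      (contGamma (by positivity)).comp h1
    have hB : ContinuousAt (fun q : ℝ => Real.Gamma (1 + 1 / q - p / q)) p := by
      refine (contGamma ?_).comp h2
      rw [div_self hp0]
      have : (1:ℝ) + 1 / p - 1 = 1 / p := by ring
      rw [this]; positivity
    have hBne : Real.Gamma (1 + 1 / p - p / p) ≠ 0 := by
      rw [div_self hp0]; simpa using hΓp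
    have hr : ContinuousAt (fun q : ℝ => q ^ (p / q)) p := by
      have hpair : ContinuousAt (fun q : ℝ => (q, p / q)) p :=
        continuousAt_id.prodMk (continuousAt_const.div continuousAt_id hp0)
      exact ContinuousAt.comp (x := p) (g := fun r : ℝ × ℝ => r.1 ^ r.2)
        (f := fun q : ℝ => (q, p / q)) (Real.continuousAt_rpow (p, p / p) (Or.inl hp0)) hpair
    have hc : ContinuousAt (fun q => holderConst p q) p :=
      ((hA.div hB hBne).mul hr)
    have hval : holderConst p p = 1 := by
      unfold holderConst
      rw [div_self hp0]
      have h1p : (1 : ℝ) + 1 / p - 1 = 1 / p := by ring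
      rw [h1p, Real.rpow_one]
      have : Real.Gamma (1 + 1 / p) = (1 / p) * Real.Gamma (1 / p) := by
        rw [add_comm, Real.Gamma_add_one (by positivity)]
      rw [this]
      field_simp
    have := hc.tendsto.mono_left (nhdsWithin_le_nhds (s := Set.Ioi p))
    rwa [hval] at this
  · -- q → ∞
    have hinv : Tendsto (fun q : ℝ => 1 / q) atTop (nhds 0) := by
      simpa using tendsto_inv_atTop_zero
    have h1 : Tendsto (fun q : ℝ => 1 + 1 / q) atTop (nhds 1) := by
      simpa using tendsto_const_nhds.add hinv
    have h2 : Tendsto (fun q : ℝ => 1 + 1 / q - p / q) atTop (nhds 1) := by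
      have hpq : Tendsto (fun q : ℝ => p / q) atTop (nhds 0) := by
        have := hinv.const_mul p
        simpa [div_eq_mul_inv, mul_comm] using this
      simpa using h1.sub hpq
    have hA : Tendsto (fun q : ℝ => Real.Gamma (1 + 1 / q)) atTop (nhds 1) := by
      have := (contGamma one_pos).tendsto.comp h1
      simpa [Real.Gamma_one, Function.comp_def] using this
    have hB : Tendsto (fun q : ℝ => Real.Gamma (1 + 1 / q - p / q)) atTop (nhds 1) := by
      have := (contGamma one_pos).tendsto.comp h2
      simpa [Real.Gamma_one, Function.comp_def] using this
    have hr : Tendsto (fun q : ℝ => q ^ (p / q)) atTop (nhds 1) := by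
      have := tendsto_rpow_div_mul_add p 1 0 zero_ne_one
      simpa using this
    have := (hA.div hB one_ne_zero).mul hr
    simpa [holderConst] using this
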